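/- Uniqueness of the algebraic Birkhoff decomposition: if φ = ψ₋^{-1} * ψ₊ = χ₋^{-1} * χ₊ are two factorizations of an algebra homomorphism φ : H → K with ψ₋, χ₋ algebra maps into k·1 + K₋ normalized by ε-augmentation (i.e. (ψ₋ - η∘ε)(H) ⊆ K₋) and ψ₊, χ₊ algebra maps into k·1 + K₊, then ψ₋ = χ₋ and ψ₊ = χ₊. -/

import Mathlib

open TensorProduct

/-- The image of `p ⊗ q` inside `H ⊗ H`, for submodules `p q : Submodule k H`. -/
noncomputable def subTmul {k H : Type*} [CommRing k] [AddCommGroup H] [Module k H]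
    (p q : Submodule k H) : Submodule k (H ⊗[k] H) :=
  LinearMap.range (TensorProduct.mapIncl p q)

/-- Convolution product of linear maps from a coalgebra to an algebra. -/
noncomputable def conv {k H A : Type*} [CommRing k] [AddCommGroup H] [Module k H]
    [Coalgebra k H] [Ring A] [Algebra k A] (f g : H →ₗ[k] A) : H →ₗ[k] A :=
  LinearMap.mul' k A ∘ₗ TensorProduct.map f g ∘ₗ Coalgebra.comul

section Helpers

open Coalgebra

variable {k H A : Type*} [CommRing k] [AddCommGroup H] [Module k H]
    [Coalgebra k H] [Ring A] [Algebra k A]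

lemma conv_repr (f g : H →ₗ[k] A) (a : H) {ι : Type*} (repr : Coalgebra.Repr k a ι) :
    conv f g a = ∑ i ∈ repr.index, f (repr.left i) * g (repr.right i) := by
  simp only [conv, LinearMap.comp_apply, ← repr.eq, map_sum, TensorProduct.map_tmul,
    LinearMap.mul'_apply]

lemma conv_counit_left (f : H →ₗ[k] A) :
    conv ((Algebra.linearMap k A) ∘ₗ Coalgebra.counit) f = f := by
  ext a
  rw [conv_repr _ _ a (ℛ k a)]
  have h := Coalgebra.sum_counit_tmul_map_eq (R := k) f a (repr := ℛ k a)
  apply_fun (TensorProduct.lid k A) at h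
  rw [map_sum] at h
  simp only [lid_tmul, one_smul] at h
  simp only [LinearMap.comp_apply, Algebra.linearMap_apply, ← Algebra.smul_def]
  exact h

lemma conv_counit_right (f : H →ₗ[k] A) :
    conv f ((Algebra.linearMap k A) ∘ₗ Coalgebra.counit) = f := by
  ext a
  rw [conv_repr _ _ a (ℛ k a)]
  have h := Coalgebra.sum_map_tmul_counit_eq (R := k) f a (repr := ℛ k a)
  apply_fun (TensorProduct.rid k A) at h
  rw [map_sum] at h
  simp only [rid_tmul, one_smul] at h
  simp only [LinearMap.comp_apply, Algebra.linearMap_apply]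
  calc ∑ i ∈ (ℛ k a).index, f ((ℛ k a).left i) * algebraMap k A (counit ((ℛ k a).right i))
      = ∑ i ∈ (ℛ k a).index, counit (R := k) ((ℛ k a).right i) • f ((ℛ k a).left i) := by
        refine Finset.sum_congr rfl fun i _ => ?_
        rw [Algebra.smul_def, ← Algebra.commutes]
    _ = f a := h

lemma conv_assoc (f g h : H →ₗ[k] A) :
    conv (conv f g) h = conv f (conv g h) := by
  ext a
  set r := ℛ k a
  set a₁ : (i : H × H) → Coalgebra.Repr k (r.left i) (H × H) := fun i => ℛ k (r.left i)
  set a₂ : (i : H × H) → Coalgebra.Repr k (r.right i) (H × H) := fun i => ℛ k (r.right i)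
  have key := Coalgebra.sum_map_tmul_tmul_eq (R := k) f g h a (repr := r) (a₁ := a₁) (a₂ := a₂)
  apply_fun (LinearMap.mul' k A ∘ₗ (LinearMap.mul' k A).lTensor A) at key
  simp only [map_sum, LinearMap.comp_apply, LinearMap.lTensor_tmul,
    LinearMap.mul'_apply] at key
  rw [conv_repr _ _ a r, conv_repr _ _ a r]
  calc ∑ i ∈ r.index, conv f g (r.left i) * h (r.right i)
      = ∑ i ∈ r.index, ∑ j ∈ (a₁ i).index,
          f ((a₁ i).left j) * (g ((a₁ i).right j) * h (r.right i)) := by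
        refine Finset.sum_congr rfl fun i _ => ?_
        rw [conv_repr _ _ _ (a₁ i), Finset.sum_mul]
        simp [mul_assoc]
    _ = ∑ i ∈ r.index, f (r.left i) * conv g h (r.right i) := by
        rw [← key]
        refine Finset.sum_congr rfl fun i _ => ?_
        rw [conv_repr _ _ _ (a₂ i), Finset.mul_sum]

lemma conv_add_left (f f' g : H →ₗ[k] A) : conv (f + f') g = conv f g + conv f' g := by
  ext a
  simp [conv_repr _ _ a (ℛ k a), add_mul, Finset.sum_add_distrib]

lemma conv_add_right (f g g' : H →ₗ[k] A) : conv f (g + g') = conv f g + conv f g' := by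
  ext a
  simp [conv_repr _ _ a (ℛ k a), mul_add, Finset.sum_add_distrib]

lemma conv_sub_left (f f' g : H →ₗ[k] A) : conv (f - f') g = conv f g - conv f' g := by
  ext a
  simp [conv_repr _ _ a (ℛ k a), sub_mul, Finset.sum_sub_distrib]

lemma conv_sub_right (f g g' : H →ₗ[k] A) : conv f (g - g') = conv f g - conv f g' := by
  ext a
  simp [conv_repr _ _ a (ℛ k a), mul_sub, Finset.sum_sub_distrib]

lemma conv_mem_of_forall {f g : H →ₗ[k] A} {N : Submodule k A}
    (h : ∀ x y : H, f x * g y ∈ N) (a : H) : conv f g a ∈ N := by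
  rw [conv_repr f g a (ℛ k a)]
  exact Submodule.sum_mem _ fun i _ => h _ _

lemma conv_mem_of_graded (ℬ : ℕ → Submodule k H) {n : ℕ} {x : H}
    (hx : (Coalgebra.comul (R := k) x : H ⊗[k] H) ∈
        ⨆ p : {p : ℕ × ℕ // p.1 + p.2 = n}, subTmul (ℬ p.1.1) (ℬ p.1.2))
    {f g : H →ₗ[k] A} {N : Submodule k A}
    (h : ∀ i j, i + j = n → ∀ a ∈ ℬ i, ∀ b ∈ ℬ j, f a * g b ∈ N) :
    conv f g x ∈ N := by
  have hle : (⨆ p : {p : ℕ × ℕ // p.1 + p.2 = n}, subTmul (ℬ p.1.1) (ℬ p.1.2)) ≤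
      Submodule.comap (LinearMap.mul' k A ∘ₗ TensorProduct.map f g) N := by
    refine iSup_le fun p => ?_
    rintro t ⟨s, rfl⟩
    induction s using TensorProduct.induction_on with
    | zero => simp
    | tmul a b =>
        simpa [TensorProduct.mapIncl] using h p.1.1 p.1.2 p.2 a a.2 b b.2
    | add u v hu hv =>
        rw [map_add]
        exact Submodule.add_mem _ hu hv
  exact hle hx

end Helpers

/-- Uniqueness of the algebraic Birkhoff decomposition: two
factorizations `φ = ψ₋⁻¹ * ψ₊ = χ₋⁻¹ * χ₊` of an algebra map `φ : H → K`, with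
`ψ₋, χ₋` algebra maps normalized so that `ψ₋ - η∘ε` takes values in `K₋`, and
`ψ₊, χ₊` algebra maps with values in `k·1 + K₊`, coincide: `ψ₋ = χ₋`, `ψ₊ = χ₊`. -/
theorem birkhoff_decomposition_unique
    {k H K : Type*} [Field k] [CommRing H] [HopfAlgebra k H]
    [CommRing K] [Algebra k K]
    (ℬ : ℕ → Submodule k H)
    (hinternal : DirectSum.IsInternal ℬ)
    (hconn : ℬ 0 = Submodule.span k {(1 : H)})
    (hgraded : ∀ n, ∀ x ∈ ℬ n,
      (Coalgebra.comul (R := k) x : H ⊗[k] H) ∈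
        ⨆ p : {p : ℕ × ℕ // p.1 + p.2 = n}, subTmul (ℬ p.1.1) (ℬ p.1.2))
    (T : K →ₗ[k] K)
    (hT : T ∘ₗ T = T)
    (hKneg : ∀ a ∈ LinearMap.range T, ∀ b ∈ LinearMap.range T, a * b ∈ LinearMap.range T)
    (hKpos : ∀ a ∈ LinearMap.ker T, ∀ b ∈ LinearMap.ker T, a * b ∈ LinearMap.ker T)
    (hT1 : T (1 : K) = 0)
    (φ ψm ψminv ψp χm χminv χp : H →ₗ[k] K)
    -- all six maps are algebra homomorphisms
    (hφ : ∀ x y, φ (x * y) = φ x * φ y) (hφ1 : φ 1 = 1)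
    (hψm : ∀ x y, ψm (x * y) = ψm x * ψm y) (hψm1 : ψm 1 = 1)
    (hψp : ∀ x y, ψp (x * y) = ψp x * ψp y) (hψp1 : ψp 1 = 1)
    (hχm : ∀ x y, χm (x * y) = χm x * χm y) (hχm1 : χm 1 = 1)
    (hχp : ∀ x y, χp (x * y) = χp x * χp y) (hχp1 : χp 1 = 1)
    -- normalization: ψ₋ - η∘ε and χ₋ - η∘ε take values in K₋ = range T
    (hψmval : ∀ x : H, ψm x - ((Algebra.linearMap k K) ∘ₗ Coalgebra.counit) x
        ∈ LinearMap.range T)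
    (hχmval : ∀ x : H, χm x - ((Algebra.linearMap k K) ∘ₗ Coalgebra.counit) x
        ∈ LinearMap.range T)
    -- ψ₊, χ₊ take values in k·1 + K₊
    (hψpval : ∀ x : H, ψp x ∈ Submodule.span k {(1 : K)} ⊔ LinearMap.ker T)
    (hχpval : ∀ x : H, χp x ∈ Submodule.span k {(1 : K)} ⊔ LinearMap.ker T)
    -- ψ₋⁻¹, χ₋⁻¹ are the convolution inverses of ψ₋, χ₋
    (hψinv : conv ψminv ψm = (Algebra.linearMap k K) ∘ₗ Coalgebra.counit ∧
             conv ψm ψminv = (Algebra.linearMap k K) ∘ₗ Coalgebra.counit)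
    (hχinv : conv χminv χm = (Algebra.linearMap k K) ∘ₗ Coalgebra.counit ∧
             conv χm χminv = (Algebra.linearMap k K) ∘ₗ Coalgebra.counit)
    -- the two factorizations of φ
    (hfacψ : φ = conv ψminv ψp)
    (hfacχ : φ = conv χminv χp) :
    ψm = χm ∧ ψp = χp := by
  classical
  set e : H →ₗ[k] K := (Algebra.linearMap k K) ∘ₗ Coalgebra.counit with he
  have hel : ∀ f : H →ₗ[k] K, conv e f = f := fun f => by rw [he]; exact conv_counit_left f
  have her : ∀ f : H →ₗ[k] K, conv f e = f := fun f => by rw [he]; exact conv_counit_right f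
  have he1 : e (1 : H) = 1 := by simp [he]
  -- the intersection of span{1} ⊔ ker T with range T is zero
  have hSN : ∀ a : K, a ∈ Submodule.span k {(1 : K)} ⊔ LinearMap.ker T →
      a ∈ LinearMap.range T → a = 0 := by
    intro a haS haN
    obtain ⟨b, rfl⟩ := haN
    obtain ⟨u, hu, p, hp, hsum⟩ := Submodule.mem_sup.1 haS
    obtain ⟨c, rfl⟩ := Submodule.mem_span_singleton.1 hu
    have hTT : T (T b) = T b := LinearMap.congr_fun hT b
    have h0 : T (T b) = 0 := by
      rw [show T b = c • (1 : K) + p from hsum.symm, map_add, map_smul, hT1,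
        LinearMap.mem_ker.1 hp, smul_zero, add_zero]
    rw [hTT] at h0
    exact h0
  -- graded strong induction principle
  have htop : (⨆ n, ℬ n) = ⊤ := hinternal.submodule_iSup_eq_top
  have gind : ∀ (N' : Submodule k K) (g : H →ₗ[k] K),
      (∀ n, (∀ m, m < n → ∀ y ∈ ℬ m, g y ∈ N') → ∀ x ∈ ℬ n, g x ∈ N') →
      ∀ x, g x ∈ N' := by
    intro N' g step x
    have hgr : ∀ n, ∀ y ∈ ℬ n, g y ∈ N' := by
      intro n
      induction n using Nat.strong_induction_on with
      | _ n ih => exact step n ih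
    have hle : (⨆ n, ℬ n) ≤ Submodule.comap g N' := iSup_le fun n y hy => hgr n y hy
    exact hle (htop ▸ Submodule.mem_top)
  -- ψm-e, χm-e take values in range T
  have hψmN : ∀ x : H, (ψm - e) x ∈ LinearMap.range T := fun x => by
    simpa using hψmval x
  have hχmN : ∀ x : H, (χm - e) x ∈ LinearMap.range T := fun x => by
    simpa using hχmval x
  -- key recursion for g₁ := ψminv - e
  have hg1eq : ψminv - e = (e - ψm) - conv (ψm - e) (ψminv - e) := by
    have h1 : conv ψm (ψminv - e) = e - ψm := by
      rw [conv_sub_right, hψinv.2, her]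
    have h2 : conv ψm (ψminv - e) = conv (ψm - e) (ψminv - e) + (ψminv - e) := by
      calc conv ψm (ψminv - e) = conv ((ψm - e) + e) (ψminv - e) := by rw [sub_add_cancel]
        _ = conv (ψm - e) (ψminv - e) + conv e (ψminv - e) := conv_add_left _ _ _
        _ = conv (ψm - e) (ψminv - e) + (ψminv - e) := by rw [hel]
    rw [← h1, h2]
    abel
  -- ψminv - e takes values in range T (graded induction)
  have hg1 : ∀ x : H, (ψminv - e) x ∈ LinearMap.range T := by
    refine gind _ _ ?_
    intro n ih x hx
    have hc : conv (ψm - e) (ψminv - e) x ∈ LinearMap.range T := by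
      refine conv_mem_of_graded ℬ (hgraded n x hx) ?_
      intro i j hij a ha b hb
      rcases Nat.lt_or_ge j n with hj | hj
      · exact hKneg _ (hψmN a) _ (ih j hj b hb)
      · have hi : i = 0 := by omega
        subst hi
        rw [hconn] at ha
        obtain ⟨c, rfl⟩ := Submodule.mem_span_singleton.1 ha
        have hz : (ψm - e) (c • (1 : H)) = 0 := by
          rw [map_smul, LinearMap.sub_apply, hψm1, he1, sub_self, smul_zero]
        rw [hz, zero_mul]
        exact Submodule.zero_mem _
    rw [LinearMap.congr_fun hg1eq x, LinearMap.sub_apply]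
    refine Submodule.sub_mem _ ?_ hc
    have hneg : (e - ψm) x = -((ψm - e) x) := by simp
    rw [hneg]
    exact Submodule.neg_mem _ (hψmN x)
  -- ρ := conv χm ψminv ; ρ - e takes values in range T
  have hρeq : conv χm ψminv - e = (χm - e) + (ψminv - e) + conv (χm - e) (ψminv - e) := by
    have : conv χm ψminv = conv ((χm - e) + e) ((ψminv - e) + e) := by
      rw [sub_add_cancel, sub_add_cancel]
    rw [this, conv_add_left, conv_add_right, conv_add_right, hel, hel, her]
    abel
  have hρN : ∀ x : H, (conv χm ψminv - e) x ∈ LinearMap.range T := by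
    intro x
    rw [LinearMap.congr_fun hρeq x]
    simp only [LinearMap.add_apply]
    refine Submodule.add_mem _ (Submodule.add_mem _ (hχmN x) (hg1 x)) ?_
    exact conv_mem_of_forall (fun a b => hKneg _ (hχmN a) _ (hg1 b)) x
  -- conv (conv χm ψminv) ψp = χp
  have hkey : conv (conv χm ψminv) ψp = χp := by
    calc conv (conv χm ψminv) ψp = conv χm (conv ψminv ψp) := conv_assoc _ _ _
      _ = conv χm φ := by rw [← hfacψ]
      _ = conv χm (conv χminv χp) := by rw [hfacχ]
      _ = conv (conv χm χminv) χp := (conv_assoc _ _ _).symm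
      _ = conv e χp := by rw [hχinv.2]
      _ = χp := hel χp
  -- recursion for ρ' := conv χm ψminv - e
  have hρ'eq : conv χm ψminv - e = (χp - ψp) - conv (conv χm ψminv - e) (ψp - e) := by
    have h1 : conv (conv χm ψminv - e) ψp = χp - ψp := by
      rw [conv_sub_left, hkey, hel]
    have h2 : conv (conv χm ψminv - e) ψp
        = conv (conv χm ψminv - e) (ψp - e) + (conv χm ψminv - e) := by
      calc conv (conv χm ψminv - e) ψp
          = conv (conv χm ψminv - e) ((ψp - e) + e) := by rw [sub_add_cancel]
        _ = conv (conv χm ψminv - e) (ψp - e) + conv (conv χm ψminv - e) e :=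
            conv_add_right _ _ _
        _ = conv (conv χm ψminv - e) (ψp - e) + (conv χm ψminv - e) := by rw [her]
    rw [← h1, h2]
    abel
  -- ρ' = 0 by graded induction
  have hρ'zero : ∀ x : H, (conv χm ψminv - e) x ∈ (⊥ : Submodule k K) := by
    refine gind _ _ ?_
    intro n ih x hx
    have hc : conv (conv χm ψminv - e) (ψp - e) x ∈ (⊥ : Submodule k K) := by
      refine conv_mem_of_graded ℬ (hgraded n x hx) ?_
      intro i j hij a ha b hb
      rcases Nat.lt_or_ge i n with hi | hi
      · have h0 : (conv χm ψminv - e) a = 0 := Submodule.mem_bot _ |>.1 (ih i hi a ha)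
        rw [h0, zero_mul]
        exact Submodule.zero_mem _
      · have hj : j = 0 := by omega
        subst hj
        rw [hconn] at hb
        obtain ⟨c, rfl⟩ := Submodule.mem_span_singleton.1 hb
        have hz : (ψp - e) (c • (1 : H)) = 0 := by
          rw [map_smul, LinearMap.sub_apply, hψp1, he1, sub_self, smul_zero]
        rw [hz, mul_zero]
        exact Submodule.zero_mem _
    have h0 : conv (conv χm ψminv - e) (ψp - e) x = 0 := Submodule.mem_bot _ |>.1 hc
    have hval : (conv χm ψminv - e) x = χp x - ψp x := by
      rw [LinearMap.congr_fun hρ'eq x, LinearMap.sub_apply, h0, sub_zero,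
        LinearMap.sub_apply]
    rw [Submodule.mem_bot, hval]
    refine hSN _ (Submodule.sub_mem _ (hχpval x) (hψpval x)) ?_
    rw [← hval]
    exact hρN x
  have hρone : conv χm ψminv = e := by
    ext x
    have := Submodule.mem_bot _ |>.1 (hρ'zero x)
    rw [LinearMap.sub_apply] at this
    exact sub_eq_zero.1 this
  -- conclude ψm = χm
  have hmeq : ψm = χm := by
    calc ψm = conv e ψm := (hel ψm).symm
      _ = conv (conv χm ψminv) ψm := by rw [hρone]
      _ = conv χm (conv ψminv ψm) := conv_assoc _ _ _
      _ = conv χm e := by rw [hψinv.1]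
      _ = χm := her χm
  refine ⟨hmeq, ?_⟩
  calc ψp = conv e ψp := (hel ψp).symm
    _ = conv (conv ψm ψminv) ψp := by rw [hψinv.2]
    _ = conv ψm (conv ψminv ψp) := conv_assoc _ _ _
    _ = conv ψm φ := by rw [← hfacψ]
    _ = conv χm φ := by rw [hmeq]
    _ = conv χm (conv χminv χp) := by rw [hfacχ]
    _ = conv (conv χm χminv) χp := (conv_assoc _ _ _).symm
    _ = conv e χp := by rw [hχinv.2]
    _ = χp := hel χp
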